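/- Let n > 1 and let e ∈ sl(n|n)₀ be a nilpotent matrix with Jordan type λ = (λ₁ ≥ … ≥ λ_{r+s}). Let Z = {x ∈ sl(n|n)^e : [x,y] ∈ ℂ·I for all y ∈ sl(n|n)^e} (the lift to sl(n|n) of the centre of the centralizer of the image of e in psl(n|n)). Then for every invertible block-diagonal matrix g = diag(A,B) ∈ GL_{2n}(ℂ) with A, B ∈ GL_n(ℂ), det A = det B and g e g⁻¹ = e, and every x ∈ Z, one has g x g⁻¹ − x ∈ ℂ·I. In other words, the group G^e of all such g acts trivially on the centre of the centralizer of the image of e in psl(n|n): (z(g^e))^{G^e} = z(g^e). -/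

import Mathlib

open Matrix

noncomputable section

namespace PaperStmt

abbrev Mat (N : ℕ) := Matrix (Fin N) (Fin N) ℂ

/-- Parity of a coordinate: `false` (even) for the first `m` coordinates, `true` (odd)
for the remaining ones. -/
def par (m : ℕ) {N : ℕ} (i : Fin N) : Bool := decide (m ≤ (i : ℕ))

/-- `x` is homogeneous of parity `b`: the entry `x i j` vanishes unless the parities of
`i` and `j` differ by `b`. -/
def IsHomog (m : ℕ) {N : ℕ} (b : Bool) (x : Mat N) : Prop :=
  ∀ i j : Fin N, (par m i != par m j) ≠ b → x i j = 0

/-- `x` is homogeneous (of some parity). -/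
def Homogeneous (m : ℕ) {N : ℕ} (x : Mat N) : Prop :=
  IsHomog m false x ∨ IsHomog m true x

/-- The odd (block-off-diagonal) part of a matrix. -/
def oddPart (m : ℕ) {N : ℕ} (x : Mat N) : Mat N :=
  Matrix.of fun i j => if par m i != par m j then x i j else 0

/-- The even (block-diagonal) part of a matrix. -/
def evenPart (m : ℕ) {N : ℕ} (x : Mat N) : Mat N :=
  Matrix.of fun i j => if par m i != par m j then 0 else x i j

/-- The super bracket, extended bilinearly from homogeneous elements: for homogeneous
`x, y` of parities `|x|, |y|` it equals `x*y - (-1)^{|x||y|} y*x`. -/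
def sbr (m : ℕ) {N : ℕ} (x y : Mat N) : Mat N :=
  x * y - y * x + (2 : ℂ) • (oddPart m y * oddPart m x)

/-- The supertrace. -/
def str (m : ℕ) {N : ℕ} (x : Mat N) : ℂ :=
  ∑ i : Fin N, if par m i then -x i i else x i i

/-- The underlying set of `sl(m|n)` inside `gl(m|n)`. -/
def slSet (m : ℕ) {N : ℕ} : Set (Mat N) := {x | str m x = 0}

/-- The centralizer `𝔞^e` of `e` in (the set underlying) `𝔞`. -/
def cent {N : ℕ} (A : Set (Mat N)) (e : Mat N) : Set (Mat N) := {x ∈ A | e * x = x * e}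

/-- `[A,B]`: the span of all super brackets of homogeneous elements of `A` and `B`. -/
def bracketSpan (m : ℕ) {N : ℕ} (A B : Set (Mat N)) : Submodule ℂ (Mat N) :=
  Submodule.span ℂ
    {z | ∃ x ∈ A, ∃ y ∈ B, Homogeneous m x ∧ Homogeneous m y ∧ z = sbr m x y}

/-- `(e,h,f)` is an `sl(2)`-triple. -/
def IsSl2 {N : ℕ} (e h f : Mat N) : Prop :=
  h * e - e * h = (2 : ℂ) • e ∧ h * f - f * h = (-2 : ℂ) • f ∧ e * f - f * e = h

/-- `𝔞^e(j)`: the `ad h`-eigenspace of eigenvalue `j` inside the centralizer `𝔞^e`. -/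
def gpart {N : ℕ} (A : Set (Mat N)) (e h : Mat N) (j : ℕ) : Set (Mat N) :=
  {x ∈ cent A e | h * x - x * h = (j : ℂ) • x}

/-- The nilpotent matrix `A` has Jordan blocks of sizes `μ 0, …, μ (r-1)` (with
multiplicity): all parts are `≥ 1` and for every `k` the number of blocks of size
`≥ k+1` equals `dim ker A^{k+1} - dim ker A^k`. -/
def HasJordanBlocks {d r : ℕ} (A : Matrix (Fin d) (Fin d) ℂ) (μ : Fin r → ℕ) : Prop :=
  (∀ i, 1 ≤ μ i) ∧
  ∀ k : ℕ,
    (Finset.univ.filter fun i => k + 1 ≤ μ i).card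
        + Module.finrank ℂ (LinearMap.ker (Matrix.mulVecLin A ^ k))
      = Module.finrank ℂ (LinearMap.ker (Matrix.mulVecLin A ^ (k + 1)))

/-- The restriction of an even matrix to the even part `V₀ = ℂ^m`. -/
def blk0 (m n : ℕ) (e : Mat (m + n)) : Matrix (Fin m) (Fin m) ℂ :=
  Matrix.of fun i j => e (Fin.castAdd n i) (Fin.castAdd n j)

/-- The restriction of an even matrix to the odd part `V₁ = ℂ^n`. -/
def blk1 (m n : ℕ) (e : Mat (m + n)) : Matrix (Fin n) (Fin n) ℂ :=
  Matrix.of fun i j => e (Fin.natAdd m i) (Fin.natAdd m j)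

/-- The even nilpotent matrix `e` has (combined, decreasingly ordered) Jordan type
`lam`, consisting of the `r` Jordan block sizes of `e|V₀` together with the `s` Jordan
block sizes of `e|V₁`. -/
def HasJordanType (m n : ℕ) (e : Mat (m + n)) {r s : ℕ} (lam : Fin (r + s) → ℕ) : Prop :=
  Antitone lam ∧
  ∃ (μ : Fin r → ℕ) (ν : Fin s → ℕ),
    HasJordanBlocks (blk0 m n e) μ ∧ HasJordanBlocks (blk1 m n e) ν ∧
      Finset.univ.val.map lam = Finset.univ.val.map μ + Finset.univ.val.map ν

/-- Extension of a partition by zero: `lamExt lam i = λ_{i+1}` for `i < k` and `0` beyond. -/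
def lamExt {k : ℕ} (lam : Fin k → ℕ) (i : ℕ) : ℕ := if h : i < k then lam ⟨i, h⟩ else 0

-- ===== auxiliary lemmas =====

lemma aux_nilp_pow_card {n : ℕ} (M : Matrix (Fin n) (Fin n) ℂ) (h : IsNilpotent M) :
    M ^ n = 0 := by
  have h1 : IsNilpotent (M.charpoly - Polynomial.X ^ (Fintype.card (Fin n))) :=
    Matrix.isNilpotent_charpoly_sub_pow_of_isNilpotent h
  have h2 : M.charpoly = Polynomial.X ^ (Fintype.card (Fin n)) := by
    have := h1.eq_zero
    linear_combination this
  have h3 := Matrix.aeval_self_charpoly M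
  rw [h2] at h3
  simpa using h3

lemma aux_core {n : ℕ} (hn : 1 < n) (E M : Matrix (Fin n) (Fin n) ℂ)
    (hEn : E ^ (n - 1) = 0) (hEM : E * M = 0)
    (hY : ∀ Y : Matrix (Fin n) (Fin n) ℂ, E * Y = Y * E → Y * M = (Y.trace / n) • M) :
    M = 0 := by
  by_contra hM
  have hex : ∃ k, E ^ k = 0 := ⟨n - 1, hEn⟩
  set d := Nat.find hex with hdef
  have hd : E ^ d = 0 := Nat.find_spec hex
  have hdle : d ≤ n - 1 := Nat.find_le hEn
  have hd0 : d ≠ 0 := by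
    intro h
    rw [h, pow_zero] at hd
    have : (1 : Matrix (Fin n) (Fin n) ℂ) ⟨0, by omega⟩ ⟨0, by omega⟩ = 0 := by rw [hd]; rfl
    simp [Matrix.one_apply] at this
  have hd1 : E ^ (d - 1) ≠ 0 := Nat.find_min hex (by omega)
  have hMe : ∃ i j, M i j ≠ 0 := by
    by_contra h; push_neg at h
    exact hM (by ext i j; simpa using h i j)
  obtain ⟨i0, j0, hij⟩ := hMe
  have hDe : ∃ k l, (E ^ (d - 1)) k l ≠ 0 := by
    by_contra h; push_neg at h
    exact hd1 (by ext i j; simpa using h i j)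
  obtain ⟨k0, l0, hkl⟩ := hDe
  set f₀ : Fin n → ℂ := Pi.single i0 1 with hf₀
  set w₀ : Fin n → ℂ := Pi.single l0 1 with hw₀
  set v : Fin n → ℂ := (E ^ (d - 1)) *ᵥ w₀ with hv
  set a : Fin n → ℂ := f₀ ᵥ* M with ha
  have hvk : v k0 = (E ^ (d - 1)) k0 l0 := by
    simp [hv, hw₀, Matrix.mulVec, dotProduct, Pi.single_apply]
  have haj : ∀ j, a j = M i0 j := by
    intro j; simp [ha, hf₀, Matrix.vecMul, dotProduct, Pi.single_apply]
  set W : Matrix (Fin n) (Fin n) ℂ := vecMulVec w₀ f₀ with hW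
  set Y : Matrix (Fin n) (Fin n) ℂ := ∑ i ∈ Finset.range d, E ^ i * W * E ^ (d - 1 - i) with hYdef
  set f : ℕ → Matrix (Fin n) (Fin n) ℂ := fun j => E ^ j * W * E ^ (d - j) with hfdef
  have hYcomm : E * Y = Y * E := by
    have h1 : E * Y = ∑ i ∈ Finset.range d, f (i + 1) := by
      rw [hYdef, Finset.mul_sum]
      refine Finset.sum_congr rfl fun i hi => ?_
      simp only [Finset.mem_range] at hi
      have hdi : d - (i + 1) = d - 1 - i := by omega
      rw [hfdef]; simp only []
      rw [hdi, pow_succ', mul_assoc E (E ^ i) W,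
        mul_assoc E (E ^ i * W) (E ^ (d - 1 - i))]
    have h2 : Y * E = ∑ i ∈ Finset.range d, f i := by
      rw [hYdef, Finset.sum_mul]
      refine Finset.sum_congr rfl fun i hi => ?_
      simp only [Finset.mem_range] at hi
      have hdi : d - i = (d - 1 - i) + 1 := by omega
      rw [hfdef]; simp only []
      rw [hdi, pow_succ, mul_assoc (E ^ i * W)]
    have h0 : f 0 = 0 := by simp [hfdef, hd]
    have hdd : f d = 0 := by simp [hfdef, hd]
    have hs := Finset.sum_range_succ' f d
    rw [Finset.sum_range_succ f d, hdd, add_zero] at hs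
    rw [h1, h2, eq_comm, hs, h0, add_zero]
  have hYM : Y * M = vecMulVec v a := by
    have hterm : ∀ i ∈ Finset.range d, i ≠ d - 1 → E ^ i * W * E ^ (d - 1 - i) * M = 0 := by
      intro i hi hne
      simp only [Finset.mem_range] at hi
      have h1 : d - 1 - i = (d - 1 - i - 1) + 1 := by omega
      have h2 : E ^ (d - 1 - i) * M = 0 := by
        rw [h1, pow_succ, mul_assoc, hEM, mul_zero]
      rw [mul_assoc, h2, mul_zero]
    have hYM1 : Y * M = E ^ (d - 1) * W * E ^ (d - 1 - (d - 1)) * M := by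
      rw [hYdef, Finset.sum_mul]
      exact Finset.sum_eq_single_of_mem (d - 1) (by simp [Finset.mem_range]; omega)
        (fun i hi hne => hterm i hi hne)
    have h3 : d - 1 - (d - 1) = 0 := by omega
    rw [hYM1, h3, pow_zero, mul_one, hW, vecMulVec_eq (Fin 1),
      vecMulVec_eq (Fin 1) (w := v), ← Matrix.mul_assoc, ← Matrix.replicateCol_mulVec, ← hv,
      Matrix.mul_assoc, ← Matrix.replicateRow_vecMul, ← ha]
  have htr : Y.trace = d * (f₀ ⬝ᵥ v) := by
    have ht0 : Y.trace = ∑ i ∈ Finset.range d, (E ^ i * W * E ^ (d - 1 - i)).trace := by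
      rw [hYdef, Matrix.trace_sum]
    rw [ht0]
    have heach : ∀ i ∈ Finset.range d, (E ^ i * W * E ^ (d - 1 - i)).trace = f₀ ⬝ᵥ v := by
      intro i hi
      simp only [Finset.mem_range] at hi
      rw [Matrix.trace_mul_comm, ← mul_assoc, ← pow_add]
      have h4 : d - 1 - i + i = d - 1 := by omega
      rw [h4, hW, vecMulVec_eq (Fin 1), ← Matrix.mul_assoc, ← Matrix.replicateCol_mulVec, ← hv,
        Matrix.trace_replicateCol_mul_replicateRow, dotProduct_comm]
    rw [Finset.sum_congr rfl heach, Finset.sum_const, Finset.card_range, nsmul_eq_mul]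
  have hrel := hY Y hYcomm
  rw [hYM, htr] at hrel
  set c : ℂ := (d : ℂ) * (f₀ ⬝ᵥ v) / n with hc
  have hentry : ∀ i j, v i * a j = c * M i j := by
    intro i j
    have := congrFun (congrFun hrel i) j
    simpa [Matrix.vecMulVec_apply, Matrix.smul_apply, smul_eq_mul] using this
  have haj0 : a j0 ≠ 0 := by rw [haj]; exact hij
  have hvk0 : v k0 ≠ 0 := by rw [hvk]; exact hkl
  have hcne : c ≠ 0 := by
    intro h
    have := hentry k0 j0
    rw [h, zero_mul] at this
    exact (mul_ne_zero hvk0 haj0) this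
  have h1 : a j0 = ∑ i, f₀ i * M i j0 := by
    simp [ha, Matrix.vecMul, dotProduct]
  have hkey : c * a j0 = (f₀ ⬝ᵥ v) * a j0 := by
    calc c * a j0 = ∑ i, f₀ i * (c * M i j0) := by
          rw [h1, Finset.mul_sum]
          exact Finset.sum_congr rfl fun i _ => by ring
      _ = ∑ i, f₀ i * (v i * a j0) := by
          exact Finset.sum_congr rfl fun i _ => by rw [← hentry]
      _ = (f₀ ⬝ᵥ v) * a j0 := by
          rw [dotProduct, Finset.sum_mul]
          exact Finset.sum_congr rfl fun i _ => by ring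
  have hceq : c = f₀ ⬝ᵥ v := mul_right_cancel₀ haj0 hkey
  have hfv : (f₀ ⬝ᵥ v) ≠ 0 := hceq ▸ hcne
  have hnne : (n : ℂ) ≠ 0 := Nat.cast_ne_zero.mpr (by omega)
  have h5 : (d : ℂ) * (f₀ ⬝ᵥ v) = (n : ℂ) * (f₀ ⬝ᵥ v) := by
    rw [hc, div_eq_iff hnne] at hceq
    linear_combination hceq
  have hdn : (d : ℂ) = n := mul_right_cancel₀ hfv h5
  have : d = n := by exact_mod_cast hdn
  omega

def auxJmat (n : ℕ) : Matrix (Fin n) (Fin n) ℂ :=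
  Matrix.of fun i j => if h : (j : ℕ) + 1 < n then (if i = ⟨(j : ℕ) + 1, h⟩ then 1 else 0) else 0

lemma aux_krylov {n : ℕ} (E : Matrix (Fin n) (Fin n) ℂ) (hEn : E ^ n = 0) (a : Fin n → ℂ)
    (ha : E ^ (n - 1) *ᵥ a ≠ 0) :
    ∃ P : Matrix (Fin n) (Fin n) ℂ, IsUnit P ∧ E * P = P * auxJmat n := by
  obtain ⟨i1, hi1⟩ : ∃ i, (E ^ (n - 1) *ᵥ a) i ≠ 0 := Function.ne_iff.mp ha
  set P : Matrix (Fin n) (Fin n) ℂ := Matrix.of (fun i j => (E ^ (j : ℕ) *ᵥ a) i) with hP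
  have hEkP : ∀ k : ℕ, ∀ i j, (E ^ k * P) i j = (E ^ (k + (j : ℕ)) *ᵥ a) i := by
    intro k i j
    have h1 : (E ^ k * P) i j = (E ^ k *ᵥ (E ^ (j : ℕ) *ᵥ a)) i := by
      simp [hP, Matrix.mul_apply, Matrix.mulVec, dotProduct]
    rw [h1, Matrix.mulVec_mulVec, ← pow_add]
  refine ⟨P, ?_, ?_⟩
  · rw [Matrix.isUnit_iff_isUnit_det, isUnit_iff_ne_zero]
    intro hdet
    obtain ⟨x, hx0, hx⟩ := (Matrix.exists_mulVec_eq_zero_iff).mpr hdet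
    apply hx0
    have key : ∀ t : ℕ, ∀ j : Fin n, (j : ℕ) = t → x j = 0 := by
      intro t
      induction t using Nat.strong_induction_on with
      | _ t ih =>
        intro j hj
        have htn : t ≤ n - 1 := by have := j.isLt; omega
        have h2 : (E ^ (n - 1 - t) * P) *ᵥ x = 0 := by
          rw [← Matrix.mulVec_mulVec, hx, Matrix.mulVec_zero]
        have h3 := congrFun h2 i1
        simp only [Matrix.mulVec, dotProduct, Pi.zero_apply] at h3
        have h4 : ∀ j' : Fin n, j' ≠ j →
            (E ^ (n - 1 - t) * P) i1 j' * x j' = 0 := by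
          intro j' hne
          rcases lt_trichotomy (j' : ℕ) t with h | h | h
          · rw [ih _ h j' rfl, mul_zero]
          · exact absurd (Fin.ext (by omega)) hne
          · have hz : E ^ (n - 1 - t + (j' : ℕ)) = 0 :=
              pow_eq_zero_of_le (by omega) hEn
            rw [hEkP, hz, Matrix.zero_mulVec, Pi.zero_apply, zero_mul]
        have h5 : (E ^ (n - 1 - t) * P) i1 j * x j = 0 := by
          rw [← h3, eq_comm]
          exact Finset.sum_eq_single_of_mem j (Finset.mem_univ j)
            (fun j' _ hne => h4 j' hne)
        rw [hEkP] at h5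
        have h6 : n - 1 - t + (j : ℕ) = n - 1 := by omega
        rw [h6] at h5
        exact (mul_eq_zero.mp h5).resolve_left hi1
    ext j
    exact key (j : ℕ) j rfl
  · ext i j
    by_cases h : (j : ℕ) + 1 < n
    · have hr : (P * auxJmat n) i j = P i ⟨(j : ℕ) + 1, h⟩ := by
        simp only [Matrix.mul_apply, auxJmat, Matrix.of_apply, dif_pos h, mul_ite, mul_one,
          mul_zero]
        simp
      rw [hr]
      have hl := hEkP 1 i j
      rw [pow_one] at hl
      rw [hl]
      show (E ^ (1 + (j : ℕ)) *ᵥ a) i = (E ^ ((j : ℕ) + 1) *ᵥ a) i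
      rw [add_comm]
    · have hj : (j : ℕ) + 1 = n := by have := j.isLt; omega
      have hr : (P * auxJmat n) i j = 0 := by
        simp [Matrix.mul_apply, auxJmat, h]
      have hl := hEkP 1 i j
      rw [pow_one] at hl
      rw [hl, hr]
      have hz : E ^ (1 + (j : ℕ)) = 0 := by
        rw [add_comm, hj]; exact hEn
      simp [hz]

lemma aux_intertwiner {n : ℕ} (E₀ E₁ : Matrix (Fin n) (Fin n) ℂ)
    (hE₀ : E₀ ^ n = 0) (hE₁ : E₁ ^ n = 0)
    (h0 : E₀ ^ (n - 1) ≠ 0) (h1 : E₁ ^ (n - 1) ≠ 0) :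
    ∃ T : Matrix (Fin n) (Fin n) ℂ, IsUnit T ∧ E₀ * T = T * E₁ := by
  have hvec : ∀ (E : Matrix (Fin n) (Fin n) ℂ), E ^ (n - 1) ≠ 0 →
      ∃ a, E ^ (n - 1) *ᵥ a ≠ 0 := by
    intro E hE
    have : ∃ k l, (E ^ (n - 1)) k l ≠ 0 := by
      by_contra h; push_neg at h
      exact hE (by ext i j; simpa using h i j)
    obtain ⟨k, l, hkl⟩ := this
    refine ⟨Pi.single l 1, fun h => hkl ?_⟩
    have := congrFun h k
    simpa [Matrix.mulVec, dotProduct, Pi.single_apply] using this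
  obtain ⟨a0, ha0⟩ := hvec E₀ h0
  obtain ⟨a1, ha1⟩ := hvec E₁ h1
  obtain ⟨P₀, hP₀u, hP₀⟩ := aux_krylov E₀ hE₀ a0 ha0
  obtain ⟨P₁, hP₁u, hP₁⟩ := aux_krylov E₁ hE₁ a1 ha1
  have hP₁d : IsUnit P₁.det := (Matrix.isUnit_iff_isUnit_det P₁).mp hP₁u
  refine ⟨P₀ * P₁⁻¹, ?_, ?_⟩
  · exact hP₀u.mul ((Matrix.isUnit_nonsing_inv_iff).mpr hP₁u)
  · have hJ : auxJmat n * P₁⁻¹ = P₁⁻¹ * E₁ := by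
      have h2 : P₁⁻¹ * (E₁ * P₁) * P₁⁻¹ = P₁⁻¹ * (P₁ * auxJmat n) * P₁⁻¹ := by rw [hP₁]
      rw [← mul_assoc, ← mul_assoc] at h2
      rw [Matrix.nonsing_inv_mul P₁ hP₁d, one_mul] at h2
      rw [mul_assoc, mul_assoc, Matrix.mul_nonsing_inv P₁ hP₁d, mul_one] at h2
      exact h2.symm
    calc E₀ * (P₀ * P₁⁻¹) = (E₀ * P₀) * P₁⁻¹ := by rw [mul_assoc]
      _ = P₀ * (auxJmat n * P₁⁻¹) := by rw [hP₀, mul_assoc]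
      _ = P₀ * (P₁⁻¹ * E₁) := by rw [hJ]
      _ = P₀ * P₁⁻¹ * E₁ := by rw [mul_assoc]

-- ===== block transfer machinery =====

abbrev MatS (n : ℕ) := Matrix (Fin n ⊕ Fin n) (Fin n ⊕ Fin n) ℂ

def Ψ (n : ℕ) : MatS n ≃ₐ[ℂ] Mat (n + n) :=
  Matrix.reindexAlgEquiv ℂ ℂ finSumFinEquiv

lemma Ψ_apply (n : ℕ) (X : MatS n) (p q : Fin n ⊕ Fin n) :
    Ψ n X (finSumFinEquiv p) (finSumFinEquiv q) = X p q := by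
  simp [Ψ]

lemma par_inl (n : ℕ) (i : Fin n) : par n (finSumFinEquiv (Sum.inl i) : Fin (n + n)) = false := by
  simp only [finSumFinEquiv_apply_left, par, Fin.coe_castAdd, decide_eq_false_iff_not]
  exact decide_eq_false (Nat.not_le.mpr i.isLt)

lemma par_inr (n : ℕ) (i : Fin n) : par n (finSumFinEquiv (Sum.inr i) : Fin (n + n)) = true := by
  simp only [finSumFinEquiv_apply_right, par, Fin.coe_natAdd, decide_eq_true_eq]
  exact decide_eq_true (Nat.le_add_right n i)

lemma oddPart_Ψ (n : ℕ) (X : MatS n) :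
    oddPart n (Ψ n X) = Ψ n (Matrix.fromBlocks 0 X.toBlocks₁₂ X.toBlocks₂₁ 0) := by
  ext i j
  obtain ⟨p, rfl⟩ := finSumFinEquiv.surjective i
  obtain ⟨q, rfl⟩ := finSumFinEquiv.surjective j
  have hL : oddPart n (Ψ n X) (finSumFinEquiv p) (finSumFinEquiv q)
      = if (par n (finSumFinEquiv p : Fin (n + n)) != par n (finSumFinEquiv q : Fin (n + n)))
          then X p q else 0 := by
    rw [oddPart, Matrix.of_apply, Ψ_apply]
  rw [hL, Ψ_apply]
  cases p <;> cases q <;>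
    simp only [par_inl, par_inr] <;>
    simp [Matrix.fromBlocks, Matrix.toBlocks₁₂, Matrix.toBlocks₂₁]

lemma str_Ψ (n : ℕ) (X : MatS n) :
    str n (Ψ n X) = X.toBlocks₁₁.trace - X.toBlocks₂₂.trace := by
  rw [str, ← Equiv.sum_comp finSumFinEquiv
    (fun i => if par n i then -(Ψ n X) i i else (Ψ n X) i i), Fintype.sum_sum_type]
  simp only [par_inl, par_inr, Ψ_apply, if_true, if_false, Bool.false_eq_true]
  rw [Matrix.trace, Matrix.trace, sub_eq_add_neg, ← Finset.sum_neg_distrib]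
  rfl

lemma fromBlocks_sub {n : ℕ} (A B C D A' B' C' D' : Matrix (Fin n) (Fin n) ℂ) :
    Matrix.fromBlocks A B C D - Matrix.fromBlocks A' B' C' D'
      = Matrix.fromBlocks (A - A') (B - B') (C - C') (D - D') := by
  ext i j
  cases i <;> cases j <;> simp [Matrix.fromBlocks]

lemma fromBlocks_diag_pow {n : ℕ} (A D : Matrix (Fin n) (Fin n) ℂ) (k : ℕ) :
    (Matrix.fromBlocks A 0 0 D) ^ k = Matrix.fromBlocks (A ^ k) 0 0 (D ^ k) := by
  induction k with
  | zero => simp [Matrix.fromBlocks_one]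
  | succ k ih =>
    rw [pow_succ, pow_succ, pow_succ, ih, Matrix.fromBlocks_multiply]
    simp


/-- For `e` nilpotent even in `sl(n|n)` (`n > 1`), every element
`g = diag(A,B)` with `A, B ∈ GL_n(ℂ)`, `det A = det B` and `g e g⁻¹ = e` moves each
element `x` of the lifted centre `Z` of the centralizer of the image of `e` in
`psl(n|n)` only by a multiple of the identity: `g x g⁻¹ − x ∈ ℂ·I`. -/
theorem psl_group_acts_trivially_on_centre
    (n : ℕ) (hn : 1 < n)
    (e : Mat (n + n)) (heEven : IsHomog n false e)
    (heSl : e ∈ (slSet n : Set (Mat (n + n)))) (heNil : IsNilpotent e)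
    (r s : ℕ) (lam : Fin (r + s) → ℕ) (hJT : HasJordanType n n e lam)
    (A B : Matrix (Fin n) (Fin n) ℂ) (hA : IsUnit A.det) (hB : IsUnit B.det)
    (hdet : A.det = B.det)
    (g : Mat (n + n))
    (hg : g = Matrix.reindex finSumFinEquiv finSumFinEquiv (Matrix.fromBlocks A 0 0 B))
    (hge : g * e * g⁻¹ = e)
    (x : Mat (n + n)) (hx : x ∈ cent (slSet n) e)
    (hxZ : ∀ y ∈ cent (slSet n) e, sbr n x y ∈ Submodule.span ℂ {(1 : Mat (n + n))}) :
    g * x * g⁻¹ - x ∈ Submodule.span ℂ {(1 : Mat (n + n))} := by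
  have hn0 : (n : ℂ) ≠ 0 := Nat.cast_ne_zero.mpr (by omega)
  -- decompose e into blocks
  obtain ⟨E₀, E₁, heB⟩ : ∃ E₀ E₁ : Matrix (Fin n) (Fin n) ℂ,
      e = Ψ n (Matrix.fromBlocks E₀ 0 0 E₁) := by
    refine ⟨((Ψ n).symm e).toBlocks₁₁, ((Ψ n).symm e).toBlocks₂₂, ?_⟩
    have h12 : ((Ψ n).symm e).toBlocks₁₂ = 0 := by
      ext i j
      show ((Ψ n).symm e) (Sum.inl i) (Sum.inr j) = 0
      have hE : ((Ψ n).symm e) (Sum.inl i) (Sum.inr j)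
          = e (finSumFinEquiv (Sum.inl i)) (finSumFinEquiv (Sum.inr j)) := by
        simp [Ψ]
      rw [hE]
      apply heEven
      rw [par_inl, par_inr]
      simp
    have h21 : ((Ψ n).symm e).toBlocks₂₁ = 0 := by
      ext i j
      show ((Ψ n).symm e) (Sum.inr i) (Sum.inl j) = 0
      have hE : ((Ψ n).symm e) (Sum.inr i) (Sum.inl j)
          = e (finSumFinEquiv (Sum.inr i)) (finSumFinEquiv (Sum.inl j)) := by
        simp [Ψ]
      rw [hE]
      apply heEven
      rw [par_inr, par_inl]
      simp
    have hfb := Matrix.fromBlocks_toBlocks ((Ψ n).symm e)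
    rw [h12, h21] at hfb
    rw [hfb, (Ψ n).apply_symm_apply]
  -- decompose x into blocks
  obtain ⟨X00, X01, X10, X11, hxB⟩ : ∃ X00 X01 X10 X11 : Matrix (Fin n) (Fin n) ℂ,
      x = Ψ n (Matrix.fromBlocks X00 X01 X10 X11) :=
    ⟨_, _, _, _, by rw [Matrix.fromBlocks_toBlocks, (Ψ n).apply_symm_apply]⟩
  have hodd_x : oddPart n x = Ψ n (Matrix.fromBlocks 0 X01 X10 0) := by
    rw [hxB, oddPart_Ψ]
    simp
  -- the master block computation
  have hsbr : ∀ Y₀ P Q Y₁ : Matrix (Fin n) (Fin n) ℂ,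
      E₀ * Y₀ = Y₀ * E₀ → E₁ * Y₁ = Y₁ * E₁ → E₀ * P = P * E₁ → E₁ * Q = Q * E₀ →
      Y₀.trace = Y₁.trace →
      ∃ c : ℂ,
        (X00 * Y₀ - Y₀ * X00) + (X01 * Q + P * X10) = c • 1 ∧
        (X00 * P - P * X11) + (X01 * Y₁ - Y₀ * X01) = 0 ∧
        (X11 * Q - Q * X00) + (X10 * Y₀ - Y₁ * X10) = 0 ∧
        (X11 * Y₁ - Y₁ * X11) + (X10 * P + Q * X01) = c • 1 := by
    intro Y₀ P Q Y₁ h0 h1 hPc hQc htr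
    have hymem : Ψ n (Matrix.fromBlocks Y₀ P Q Y₁) ∈ cent (slSet n) e := by
      refine ⟨?_, ?_⟩
      · show str n (Ψ n (Matrix.fromBlocks Y₀ P Q Y₁)) = 0
        rw [str_Ψ, Matrix.toBlocks_fromBlocks₁₁, Matrix.toBlocks_fromBlocks₂₂, htr, sub_self]
      · show e * Ψ n (Matrix.fromBlocks Y₀ P Q Y₁) = Ψ n (Matrix.fromBlocks Y₀ P Q Y₁) * e
        rw [heB, ← _root_.map_mul, ← _root_.map_mul]
        congr 1
        rw [Matrix.fromBlocks_multiply, Matrix.fromBlocks_multiply]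
        simp only [zero_mul, mul_zero, add_zero, zero_add]
        rw [h0, h1, hPc, hQc]
    obtain ⟨c, hc⟩ := Submodule.mem_span_singleton.mp
      (hxZ (Ψ n (Matrix.fromBlocks Y₀ P Q Y₁)) hymem)
    have hodd_y : oddPart n (Ψ n (Matrix.fromBlocks Y₀ P Q Y₁))
        = Ψ n (Matrix.fromBlocks 0 P Q 0) := by
      rw [oddPart_Ψ]
      simp
    have hmain : Matrix.fromBlocks X00 X01 X10 X11 * Matrix.fromBlocks Y₀ P Q Y₁
        - Matrix.fromBlocks Y₀ P Q Y₁ * Matrix.fromBlocks X00 X01 X10 X11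
        + (2 : ℂ) • (Matrix.fromBlocks 0 P Q (0 : Matrix (Fin n) (Fin n) ℂ)
            * Matrix.fromBlocks 0 X01 X10 0)
        = c • 1 := by
      apply (Ψ n).injective
      rw [_root_.map_add, _root_.map_sub, _root_.map_mul, _root_.map_mul, _root_.map_smul, _root_.map_mul, ← hodd_x, ← hodd_y, ← hxB,
        _root_.map_smul, _root_.map_one]
      exact hc.symm
    have hone : (c : ℂ) • (1 : MatS n)
        = Matrix.fromBlocks (c • 1) 0 0 (c • (1 : Matrix (Fin n) (Fin n) ℂ)) := by
      rw [← Matrix.fromBlocks_one, Matrix.fromBlocks_smul, smul_zero]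
    rw [hone, Matrix.fromBlocks_multiply, Matrix.fromBlocks_multiply, Matrix.fromBlocks_multiply,
      fromBlocks_sub, Matrix.fromBlocks_smul, Matrix.fromBlocks_add, Matrix.fromBlocks_inj]
      at hmain
    obtain ⟨ha1, ha2, ha3, ha4⟩ := hmain
    simp only [zero_mul, mul_zero, add_zero, zero_add, smul_zero] at ha1 ha2 ha3 ha4
    refine ⟨c, ?_, ?_, ?_, ?_⟩
    · rw [← ha1, two_smul]; abel
    · rw [← ha2]; abel
    · rw [← ha3]; abel
    · rw [← ha4, two_smul]; abel
  -- even-part consequences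
  have hscalar0 : ∀ Y₀ : Matrix (Fin n) (Fin n) ℂ, E₀ * Y₀ = Y₀ * E₀ →
      Y₀ * X01 = (Y₀.trace / n) • X01 ∧ X10 * Y₀ = (Y₀.trace / n) • X10 ∧
      X00 * Y₀ = Y₀ * X00 := by
    intro Y₀ h0
    set t : ℂ := Y₀.trace / n with ht
    have h1 : E₁ * (t • (1 : Matrix (Fin n) (Fin n) ℂ)) = (t • 1) * E₁ := by
      rw [Matrix.mul_smul, Matrix.smul_mul, mul_one, one_mul]
    have htr : Y₀.trace = (t • (1 : Matrix (Fin n) (Fin n) ℂ)).trace := by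
      rw [Matrix.trace_smul, Matrix.trace_one, smul_eq_mul, Fintype.card_fin, ht]
      field_simp
    obtain ⟨c, hc1, hc2, hc3, hc4⟩ := hsbr Y₀ 0 0 (t • 1) h0 h1 (by simp) (by simp) htr
    simp only [zero_mul, mul_zero, add_zero, zero_add, sub_zero] at hc1 hc2 hc3 hc4
    have e2 : X01 * (t • 1) - Y₀ * X01 = 0 := by rw [← hc2]
    have e3 : X10 * Y₀ - (t • 1) * X10 = 0 := by rw [← hc3]
    have hX01 : Y₀ * X01 = t • X01 := by
      have := sub_eq_zero.mp e2
      rw [Matrix.mul_smul, mul_one] at this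
      exact this.symm
    have hX10 : X10 * Y₀ = t • X10 := by
      have := sub_eq_zero.mp e3
      rw [Matrix.smul_mul, one_mul] at this
      exact this
    have hcc : c = 0 := by
      have h5 : X00 * Y₀ - Y₀ * X00 = c • 1 := by rw [← hc1]
      have h6 := congrArg Matrix.trace h5
      rw [Matrix.trace_sub, Matrix.trace_mul_comm, sub_self, Matrix.trace_smul,
        Matrix.trace_one, smul_eq_mul, Fintype.card_fin] at h6
      exact ((mul_eq_zero.mp h6.symm).resolve_right hn0)
    have hX00 : X00 * Y₀ = Y₀ * X00 := by
      have h5 : X00 * Y₀ - Y₀ * X00 = c • 1 := by rw [← hc1]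
      rw [hcc, zero_smul] at h5
      exact sub_eq_zero.mp h5
    exact ⟨hX01, hX10, hX00⟩
  have hscalar1 : ∀ Y₁ : Matrix (Fin n) (Fin n) ℂ, E₁ * Y₁ = Y₁ * E₁ →
      X01 * Y₁ = (Y₁.trace / n) • X01 ∧ Y₁ * X10 = (Y₁.trace / n) • X10 ∧
      X11 * Y₁ = Y₁ * X11 := by
    intro Y₁ h1
    set t : ℂ := Y₁.trace / n with ht
    have h0 : E₀ * (t • (1 : Matrix (Fin n) (Fin n) ℂ)) = (t • 1) * E₀ := by
      rw [Matrix.mul_smul, Matrix.smul_mul, mul_one, one_mul]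
    have htr : (t • (1 : Matrix (Fin n) (Fin n) ℂ)).trace = Y₁.trace := by
      rw [Matrix.trace_smul, Matrix.trace_one, smul_eq_mul, Fintype.card_fin, ht]
      field_simp
    obtain ⟨c, hc1, hc2, hc3, hc4⟩ := hsbr (t • 1) 0 0 Y₁ h0 h1 (by simp) (by simp) htr
    simp only [zero_mul, mul_zero, add_zero, zero_add, sub_zero] at hc1 hc2 hc3 hc4
    have e2 : X01 * Y₁ - (t • 1) * X01 = 0 := by rw [← hc2]
    have e3 : X10 * (t • 1) - Y₁ * X10 = 0 := by rw [← hc3]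
    have hX01 : X01 * Y₁ = t • X01 := by
      have := sub_eq_zero.mp e2
      rw [Matrix.smul_mul, one_mul] at this
      exact this
    have hX10 : Y₁ * X10 = t • X10 := by
      have := sub_eq_zero.mp e3
      rw [Matrix.mul_smul, mul_one] at this
      exact this.symm
    have hcc : c = 0 := by
      have h5 : X11 * Y₁ - Y₁ * X11 = c • 1 := by rw [← hc4]
      have h6 := congrArg Matrix.trace h5
      rw [Matrix.trace_sub, Matrix.trace_mul_comm, sub_self, Matrix.trace_smul,
        Matrix.trace_one, smul_eq_mul, Fintype.card_fin] at h6
      exact ((mul_eq_zero.mp h6.symm).resolve_right hn0)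
    have hX11 : X11 * Y₁ = Y₁ * X11 := by
      have h5 : X11 * Y₁ - Y₁ * X11 = c • 1 := by rw [← hc4]
      rw [hcc, zero_smul] at h5
      exact sub_eq_zero.mp h5
    exact ⟨hX01, hX10, hX11⟩
  -- odd-part consequence
  have hoddpair : ∀ P Q : Matrix (Fin n) (Fin n) ℂ, E₀ * P = P * E₁ → E₁ * Q = Q * E₀ →
      ∃ c : ℂ, X01 * Q + P * X10 = c • 1 ∧ X10 * P + Q * X01 = c • 1 := by
    intro P Q hPc hQc
    obtain ⟨c, hc1, hc2, hc3, hc4⟩ := hsbr 0 P Q 0 (by simp) (by simp) hPc hQc (by simp)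
    simp only [zero_mul, mul_zero, sub_zero, zero_sub, sub_self, zero_add, add_zero,
      neg_zero] at hc1 hc4
    exact ⟨c, hc1, hc4⟩
  -- nilpotency of the blocks
  obtain ⟨K, hK⟩ := heNil
  have hFK : (Matrix.fromBlocks E₀ 0 0 E₁ : MatS n) ^ K = 0 := by
    apply (Ψ n).injective
    rw [_root_.map_pow, ← heB, hK, _root_.map_zero]
  rw [fromBlocks_diag_pow, ← Matrix.fromBlocks_zero, Matrix.fromBlocks_inj] at hFK
  obtain ⟨hE0K, -, -, hE1K⟩ := hFK
  have hE0n : E₀ ^ n = 0 := aux_nilp_pow_card E₀ ⟨K, hE0K⟩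
  have hE1n : E₁ ^ n = 0 := aux_nilp_pow_card E₁ ⟨K, hE1K⟩
  have htrE0 : E₀.trace = 0 := (Matrix.isNilpotent_trace_of_isNilpotent ⟨K, hE0K⟩).eq_zero
  have htrE1 : E₁.trace = 0 := (Matrix.isNilpotent_trace_of_isNilpotent ⟨K, hE1K⟩).eq_zero
  have hE0X01 : E₀ * X01 = 0 := by
    have := (hscalar0 E₀ rfl).1
    rwa [htrE0, zero_div, zero_smul] at this
  have hX10E0 : X10 * E₀ = 0 := by
    have := (hscalar0 E₀ rfl).2.1
    rwa [htrE0, zero_div, zero_smul] at this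
  have hX01E1 : X01 * E₁ = 0 := by
    have := (hscalar1 E₁ rfl).1
    rwa [htrE1, zero_div, zero_smul] at this
  have hE1X10 : E₁ * X10 = 0 := by
    have := (hscalar1 E₁ rfl).2.1
    rwa [htrE1, zero_div, zero_smul] at this
  -- kill the odd blocks
  have hX : X01 = 0 ∧ X10 = 0 := by
    by_cases hreg0 : E₀ ^ (n - 1) = 0
    · constructor
      · exact aux_core hn E₀ X01 hreg0 hE0X01 (fun Y hY => (hscalar0 Y hY).1)
      · have h1 : (E₀ᵀ) ^ (n - 1) = 0 := by
          rw [← Matrix.transpose_pow, hreg0, Matrix.transpose_zero]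
        have h2 : E₀ᵀ * X10ᵀ = 0 := by
          rw [← Matrix.transpose_mul, hX10E0, Matrix.transpose_zero]
        have h3 : ∀ Y : Matrix (Fin n) (Fin n) ℂ, E₀ᵀ * Y = Y * E₀ᵀ →
            Y * X10ᵀ = (Y.trace / n) • X10ᵀ := by
          intro Y hYc
          have hYc' : E₀ * Yᵀ = Yᵀ * E₀ := by
            have := congrArg Matrix.transpose hYc
            rw [Matrix.transpose_mul, Matrix.transpose_mul, Matrix.transpose_transpose] at this
            exact this.symm
          have h4 := congrArg Matrix.transpose ((hscalar0 Yᵀ hYc').2.1)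
          rw [Matrix.transpose_mul, Matrix.transpose_transpose, Matrix.transpose_smul,
            Matrix.trace_transpose] at h4
          exact h4
        have h5 := aux_core hn E₀ᵀ X10ᵀ h1 h2 h3
        have := congrArg Matrix.transpose h5
        rwa [Matrix.transpose_transpose, Matrix.transpose_zero] at this
    · by_cases hreg1 : E₁ ^ (n - 1) = 0
      · constructor
        · have h1 : (E₁ᵀ) ^ (n - 1) = 0 := by
            rw [← Matrix.transpose_pow, hreg1, Matrix.transpose_zero]
          have h2 : E₁ᵀ * X01ᵀ = 0 := by
            rw [← Matrix.transpose_mul, hX01E1, Matrix.transpose_zero]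
          have h3 : ∀ Y : Matrix (Fin n) (Fin n) ℂ, E₁ᵀ * Y = Y * E₁ᵀ →
              Y * X01ᵀ = (Y.trace / n) • X01ᵀ := by
            intro Y hYc
            have hYc' : E₁ * Yᵀ = Yᵀ * E₁ := by
              have := congrArg Matrix.transpose hYc
              rw [Matrix.transpose_mul, Matrix.transpose_mul, Matrix.transpose_transpose] at this
              exact this.symm
            have h4 := congrArg Matrix.transpose ((hscalar1 Yᵀ hYc').1)
            rw [Matrix.transpose_mul, Matrix.transpose_transpose, Matrix.transpose_smul,
              Matrix.trace_transpose] at h4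
            exact h4
          have h5 := aux_core hn E₁ᵀ X01ᵀ h1 h2 h3
          have := congrArg Matrix.transpose h5
          rwa [Matrix.transpose_transpose, Matrix.transpose_zero] at this
        · exact aux_core hn E₁ X10 hreg1 hE1X10 (fun Y hY => (hscalar1 Y hY).2.1)
      · -- both blocks regular
        have hE0ne : E₀ ≠ 0 := fun h => hreg0 (by rw [h]; exact zero_pow (by omega))
        have hE1ne : E₁ ≠ 0 := fun h => hreg1 (by rw [h]; exact zero_pow (by omega))
        obtain ⟨T, hTu, hT⟩ := aux_intertwiner E₀ E₁ hE0n hE1n hreg0 hreg1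
        obtain ⟨S, hSu, hS⟩ := aux_intertwiner E₁ E₀ hE1n hE0n hreg1 hreg0
        have hTd := (Matrix.isUnit_iff_isUnit_det T).mp hTu
        have hSd := (Matrix.isUnit_iff_isUnit_det S).mp hSu
        obtain ⟨c, hc1, hc2⟩ := hoddpair T 0 hT (by simp)
        simp only [mul_zero, zero_mul, zero_add, add_zero] at hc1 hc2
        -- hc1 : T * X10 = c • 1
        have hX10v : X10 = c • T⁻¹ := by
          have h6 := congrArg (fun Z => T⁻¹ * Z) hc1
          simp only [← mul_assoc, Matrix.nonsing_inv_mul T hTd, one_mul,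
            Matrix.mul_smul, mul_one] at h6
          exact h6
        have h7 : c • (T⁻¹ * E₀) = 0 := by
          rw [← Matrix.smul_mul, ← hX10v, hX10E0]
        have h8 : c • E₀ = 0 := by
          have h9 := congrArg (fun Z => T * Z) h7
          simp only [Matrix.mul_smul, ← mul_assoc, Matrix.mul_nonsing_inv T hTd, one_mul,
            mul_zero] at h9
          exact h9
        have hc0 : c = 0 := (smul_eq_zero.mp h8).resolve_right hE0ne
        have hX10z : X10 = 0 := by rw [hX10v, hc0, zero_smul]
        obtain ⟨c', hd1, hd2⟩ := hoddpair 0 S (by simp) hS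
        simp only [mul_zero, zero_mul, zero_add, add_zero] at hd1 hd2
        -- hd1 : X01 * S = c' • 1
        have hX01v : X01 = c' • S⁻¹ := by
          have h6 := congrArg (fun Z => Z * S⁻¹) hd1
          simp only [mul_assoc, Matrix.mul_nonsing_inv S hSd, mul_one,
            Matrix.smul_mul, one_mul] at h6
          exact h6
        have h7 : c' • (S⁻¹ * E₁) = 0 := by
          have : X01 * E₁ = c' • (S⁻¹ * E₁) := by rw [hX01v, Matrix.smul_mul]
          rw [← this, hX01E1]
        have h8 : c' • E₁ = 0 := by
          have h9 := congrArg (fun Z => S * Z) h7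
          simp only [Matrix.mul_smul, ← mul_assoc, Matrix.mul_nonsing_inv S hSd, one_mul,
            mul_zero] at h9
          exact h9
        have hc0' : c' = 0 := (smul_eq_zero.mp h8).resolve_right hE1ne
        have hX01z : X01 = 0 := by rw [hX01v, hc0', zero_smul]
        exact ⟨hX01z, hX10z⟩
  obtain ⟨hX01z, hX10z⟩ := hX
  -- now x is block diagonal; conclude
  have hxB' : x = Ψ n (Matrix.fromBlocks X00 0 0 X11) := by rw [hxB, hX01z, hX10z]
  have hgB : g = Ψ n (Matrix.fromBlocks A 0 0 B) := hg
  have hgd : IsUnit g.det := by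
    rw [hgB]
    have hdet2 : (Ψ n (Matrix.fromBlocks A 0 0 B)).det = (Matrix.fromBlocks A 0 0 B).det := by
      simp [Ψ]
    rw [hdet2, Matrix.det_fromBlocks_zero₂₁]
    exact hA.mul hB
  have hge' : e * g = g * e := by
    conv_lhs => rw [← hge]
    rw [mul_assoc (g * e) g⁻¹ g, Matrix.nonsing_inv_mul g hgd, mul_one]
  have hblocks : E₀ * A = A * E₀ ∧ E₁ * B = B * E₁ := by
    have h9 : (Matrix.fromBlocks E₀ 0 0 E₁ : MatS n) * Matrix.fromBlocks A 0 0 B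
        = Matrix.fromBlocks A 0 0 B * Matrix.fromBlocks E₀ 0 0 E₁ := by
      apply (Ψ n).injective
      rw [_root_.map_mul, _root_.map_mul, ← heB, ← hgB]
      exact hge'
    rw [Matrix.fromBlocks_multiply, Matrix.fromBlocks_multiply, Matrix.fromBlocks_inj] at h9
    obtain ⟨h9a, -, -, h9d⟩ := h9
    constructor
    · simpa using h9a
    · simpa using h9d
  have hAX : X00 * A = A * X00 := (hscalar0 A hblocks.1).2.2
  have hBX : X11 * B = B * X11 := (hscalar1 B hblocks.2).2.2
  have hgx : g * x = x * g := by
    rw [hgB, hxB', ← _root_.map_mul, ← _root_.map_mul]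
    congr 1
    rw [Matrix.fromBlocks_multiply, Matrix.fromBlocks_multiply]
    simp only [zero_mul, mul_zero, add_zero, zero_add]
    rw [Matrix.fromBlocks_inj]
    exact ⟨hAX.symm, rfl, rfl, hBX.symm⟩
  have hfin : g * x * g⁻¹ = x := by
    rw [hgx, mul_assoc, Matrix.mul_nonsing_inv g hgd, mul_one]
  rw [hfin, sub_self]
  exact Submodule.zero_mem _

end PaperStmt

end
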